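/- Let D ⊆ ω^{<ω} be a set of pairwise incomparable finite sequences all of whose infinite extensions are closed and discrete in ω^ω, let {d_n : n ∈ ω} be a one-to-one enumeration of D, and let (D_n)_{n∈ω} be sets with the same two properties. Then the set E = ⋃_{n∈ω} d_n ⌢ D_n (concatenating each element of D_n after d_n) again consists of pairwise incomparable sequences and every infinite extension of E is closed and discrete in ω^ω. -/

import Mathlib

/-- The initial segment `σ|n` of an infinite sequence `σ ∈ ω^ω`. -/
def initSeg (σ : ℕ → ℕ) (n : ℕ) : List ℕ :=
  (List.range n).map σ

/-- `σ ∈ ω^ω` extends the finite sequence `s` (written `σ ⊐ s`). -/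
def SeqExtends (σ : ℕ → ℕ) (s : List ℕ) : Prop :=
  initSeg σ s.length = s

/-- Two finite sequences are comparable if one is an initial segment of the
other. -/
def Compat (s t : List ℕ) : Prop :=
  s <+: t ∨ t <+: s

/-- `A ⊆ ω^ω` is an infinite extension of `B ⊆ ω^{<ω}`: there is a bijection
`φ : B → A` with `φ(s) ⊐ s` for every `s ∈ B`. -/
def IsInfExtension (A : Set (ℕ → ℕ)) (B : Set (List ℕ)) : Prop :=
  ∃ φ : List ℕ → (ℕ → ℕ), Set.BijOn φ B A ∧ ∀ s ∈ B, SeqExtends (φ s) s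

/-- Membership in the class `𝒟`: the elements of `D` are pairwise incomparable,
and every infinite extension of `D` is closed and discrete in `ω^ω` with the
product topology. -/
def MemD (D : Set (List ℕ)) : Prop :=
  (∀ s ∈ D, ∀ t ∈ D, s ≠ t → ¬ Compat s t) ∧
    ∀ A : Set (ℕ → ℕ), IsInfExtension A D → IsClosed A ∧ DiscreteTopology A

namespace MemDAux

lemma initSeg_length (σ : ℕ → ℕ) (n : ℕ) : (initSeg σ n).length = n := by
  simp [initSeg]

lemma initSeg_eq_iff {σ τ : ℕ → ℕ} {n : ℕ} :
    initSeg σ n = initSeg τ n ↔ ∀ i < n, σ i = τ i := by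
  constructor
  · intro h i hi
    have h1 : (initSeg σ n)[i]'(by simpa [initSeg_length] using hi) =
        (initSeg τ n)[i]'(by simpa [initSeg_length] using hi) := by
      simp only [h]
    simpa [initSeg] using h1
  · intro h
    apply List.ext_getElem (by simp [initSeg_length])
    intro i h1 h2
    simp only [initSeg, List.getElem_map, List.getElem_range]
    exact h i (by simpa [initSeg_length] using h1)

lemma initSeg_take (σ : ℕ → ℕ) {m n : ℕ} (h : m ≤ n) :
    initSeg σ m = (initSeg σ n).take m := by
  simp [initSeg, ← List.map_take, List.take_range, Nat.min_eq_left h]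

lemma extends_of_agree {σ τ : ℕ → ℕ} {s : List ℕ} {n : ℕ}
    (h : ∀ i < n, σ i = τ i) (hτ : SeqExtends τ s) (hn : s.length ≤ n) :
    SeqExtends σ s :=
  calc initSeg σ s.length = initSeg τ s.length :=
        initSeg_eq_iff.2 fun i hi => h i (hi.trans_le hn)
    _ = s := hτ

lemma extends_of_prefix {σ : ℕ → ℕ} {s t : List ℕ} (hp : s <+: t)
    (ht : SeqExtends σ t) : SeqExtends σ s := by
  have hl : s.length ≤ t.length := hp.length_le
  unfold SeqExtends at *
  rw [initSeg_take σ hl, ht, ← List.prefix_iff_eq_take.1 hp]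

lemma compat_of_extends {σ : ℕ → ℕ} {s t : List ℕ}
    (hs : SeqExtends σ s) (ht : SeqExtends σ t) : Compat s t := by
  rcases le_total s.length t.length with h | h
  · left
    rw [List.prefix_iff_eq_take, ← ht, ← initSeg_take σ h, hs]
  · right
    rw [List.prefix_iff_eq_take, ← hs, ← initSeg_take σ h, ht]

lemma initSeg_add (σ : ℕ → ℕ) (a b : ℕ) :
    initSeg σ (a + b) = initSeg σ a ++ initSeg (fun i => σ (a + i)) b := by
  simp [initSeg, List.range_add, List.map_map, Function.comp]

lemma seqExtends_append {σ : ℕ → ℕ} {s t : List ℕ} :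
    SeqExtends σ (s ++ t) ↔
      SeqExtends σ s ∧ SeqExtends (fun i => σ (s.length + i)) t := by
  unfold SeqExtends
  rw [List.length_append, initSeg_add]
  constructor
  · intro h
    exact List.append_inj h (by simp [initSeg_length])
  · rintro ⟨h1, h2⟩
    rw [h1, h2]

lemma eq_of_shift {σ τ : ℕ → ℕ} {s : List ℕ} (hσ : SeqExtends σ s)
    (hτ : SeqExtends τ s)
    (h : ∀ i, σ (s.length + i) = τ (s.length + i)) : σ = τ := by
  funext i
  rcases lt_or_ge i s.length with hi | hi
  · exact initSeg_eq_iff.1 (hσ.trans hτ.symm) i hi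
  · have := h (i - s.length)
    rwa [Nat.add_sub_cancel' hi] at this

lemma exists_cylinder_disjoint {C : Set (ℕ → ℕ)} (hC : IsClosed C) {σ : ℕ → ℕ}
    (hσ : σ ∉ C) : ∃ k, ∀ η ∈ C, ¬ (∀ i < k, η i = σ i) := by
  obtain ⟨U, ⟨x, n, rfl⟩, hσU, hUC⟩ :=
    (PiNat.isTopologicalBasis_cylinders (fun _ : ℕ => ℕ)).exists_subset_of_mem_open
      (Set.mem_compl hσ) hC.isOpen_compl
  refine ⟨n, fun η hη hagree => ?_⟩
  exact hUC (PiNat.mem_cylinder_iff.2 fun i hi =>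
    (hagree i hi).trans (PiNat.mem_cylinder_iff.1 hσU i hi)) hη

end MemDAux

open MemDAux in
/-- If `D ∈ 𝒟`, `{d_n : n ∈ ω}` is a one-to-one enumeration of `D`, and each
`D_n ∈ 𝒟`, then `E = ⋃_n d_n ⌢ D_n` again belongs to `𝒟`: it consists of
pairwise incomparable sequences and every infinite extension of `E` is closed
and discrete in `ω^ω`. -/
theorem memD_iUnion_concat (D : Set (List ℕ)) (hD : MemD D) (d : ℕ → List ℕ)
    (hinj : Function.Injective d) (hrange : Set.range d = D)
    (Dn : ℕ → Set (List ℕ)) (hDn : ∀ n, MemD (Dn n)) :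
    MemD (⋃ n : ℕ, (fun t => d n ++ t) '' Dn n) := by
  set E := ⋃ n : ℕ, (fun t => d n ++ t) '' Dn n with hE
  have hmemE : ∀ e, e ∈ E ↔ ∃ n s, s ∈ Dn n ∧ d n ++ s = e := by
    intro e
    simp [hE, Set.mem_iUnion]
  have hdD : ∀ n, d n ∈ D := fun n => hrange ▸ Set.mem_range_self n
  -- Part 1: pairwise incomparability.
  have key : ∀ e ∈ E, ∀ f ∈ E, e ≠ f → ¬ e <+: f := by
    rintro e he f hf hne hpre
    obtain ⟨n, s, hs, rfl⟩ := (hmemE e).1 he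
    obtain ⟨m, t, ht, rfl⟩ := (hmemE f).1 hf
    have hcompd : Compat (d n) (d m) :=
      List.prefix_or_prefix_of_prefix
        ((List.prefix_append (d n) s).trans hpre) (List.prefix_append (d m) t)
    have hdnm : d n = d m := by
      by_contra hne'
      exact hD.1 (d n) (hdD n) (d m) (hdD m) hne' hcompd
    have hnm : n = m := hinj hdnm
    subst hnm
    have hst : s <+: t := (List.prefix_append_right_inj (d n)).1 hpre
    exact (hDn n).1 s hs t ht (fun h => hne (by rw [h])) (Or.inl hst)
  have hincomp : ∀ s ∈ E, ∀ t ∈ E, s ≠ t → ¬ Compat s t := by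
    rintro s hs t ht hne (h | h)
    · exact key s hs t ht hne h
    · exact key t ht s hs hne.symm h
  refine ⟨hincomp, ?_⟩
  rintro A ⟨φ, hbij, hext⟩
  have hAimg : A = φ '' E := hbij.image_eq.symm
  -- the key separation fact for closedness
  have hsep : ∀ σ, σ ∉ A → ∃ k, ∀ η ∈ A, ¬ (∀ i < k, η i = σ i) := by
    intro σ hσ
    by_cases hcase : ∃ n, SeqExtends σ (d n)
    · obtain ⟨n, hn⟩ := hcase
      set L := (d n).length with hL
      set ψ : List ℕ → (ℕ → ℕ) := fun s => fun i => φ (d n ++ s) (L + i) with hψ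
      have hmem : ∀ s ∈ Dn n, (d n ++ s) ∈ E := fun s hs =>
        (hmemE _).2 ⟨n, s, hs, rfl⟩
      have hφext : ∀ s ∈ Dn n, SeqExtends (φ (d n ++ s)) (d n) ∧
          SeqExtends (ψ s) s := fun s hs =>
        seqExtends_append.1 (hext _ (hmem s hs))
      have hbij' : Set.BijOn ψ (Dn n) (ψ '' Dn n) := by
        refine ⟨Set.mapsTo_image _ _, ?_, Set.surjOn_image _ _⟩
        intro s hs t ht hst
        have h1 : φ (d n ++ s) = φ (d n ++ t) :=
          eq_of_shift (hφext s hs).1 (hφext t ht).1 (fun i => congrFun hst i)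
        have := hbij.injOn (hmem s hs) (hmem t ht) h1
        exact List.append_cancel_left this
      have hclosed : IsClosed (ψ '' Dn n) :=
        ((hDn n).2 (ψ '' Dn n) ⟨ψ, hbij', fun s hs => (hφext s hs).2⟩).1
      have hσ' : (fun i => σ (L + i)) ∉ ψ '' Dn n := by
        rintro ⟨s, hs, heq⟩
        apply hσ
        have : σ = φ (d n ++ s) :=
          eq_of_shift hn (hφext s hs).1 (fun i => (congrFun heq i).symm)
        rw [hAimg, this]
        exact Set.mem_image_of_mem φ (hmem s hs)
      obtain ⟨k, hk⟩ := exists_cylinder_disjoint hclosed hσ'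
      refine ⟨L + k, ?_⟩
      intro η hη hagree
      rw [hAimg] at hη
      obtain ⟨e, he, rfl⟩ := hη
      obtain ⟨m, t, ht, rfl⟩ := (hmemE e).1 he
      have hηdm : SeqExtends (φ (d m ++ t)) (d m) :=
        (seqExtends_append.1 (hext _ he)).1
      have hηdn : SeqExtends (φ (d m ++ t)) (d n) :=
        extends_of_agree
          (fun i hi => hagree i (hi.trans_le (Nat.le_add_right L k))) hn le_rfl
      have hdnm : d m = d n := by
        by_contra hne'
        exact hD.1 (d m) (hdD m) (d n) (hdD n) hne'
          (compat_of_extends hηdm hηdn)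
      have hmn : m = n := hinj hdnm
      subst hmn
      exact hk (ψ t) (Set.mem_image_of_mem ψ ht)
        (fun i hi => hagree (L + i) (by omega))
    · -- σ extends no d n
      set ψ : List ℕ → (ℕ → ℕ) :=
        fun s => fun i => if h : i < s.length then s[i] else 0 with hψ
      have hψext : ∀ s : List ℕ, SeqExtends (ψ s) s := by
        intro s
        apply List.ext_getElem (by simp [initSeg_length])
        intro i h1 h2
        simp only [initSeg, List.getElem_map, List.getElem_range, hψ]
        rw [dif_pos h2]
      have hbijC : Set.BijOn ψ D (ψ '' D) := by
        refine ⟨Set.mapsTo_image _ _, ?_, Set.surjOn_image _ _⟩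
        intro s hs t ht hst
        by_contra hne
        exact hD.1 s hs t ht hne
          (compat_of_extends (hψext s) (hst ▸ hψext t))
      have hclosed : IsClosed (ψ '' D) :=
        (hD.2 (ψ '' D) ⟨ψ, hbijC, fun s _ => hψext s⟩).1
      have hσC : σ ∉ ψ '' D := by
        rintro ⟨s, hsD, heq⟩
        obtain ⟨n, rfl⟩ := hrange.symm ▸ hsD
        exact hcase ⟨n, heq ▸ hψext (d n)⟩
      obtain ⟨k, hk⟩ := exists_cylinder_disjoint hclosed hσC
      refine ⟨k, ?_⟩
      intro η hη hagree
      rw [hAimg] at hη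
      obtain ⟨e, he, rfl⟩ := hη
      obtain ⟨m, t, ht, rfl⟩ := (hmemE e).1 he
      have hηdm : SeqExtends (φ (d m ++ t)) (d m) :=
        (seqExtends_append.1 (hext _ he)).1
      have hkL : k ≤ (d m).length := by
        by_contra h
        push_neg at h
        exact hcase ⟨m, extends_of_agree (fun i hi => (hagree i hi).symm)
          hηdm h.le⟩
      apply hk (ψ (d m)) (Set.mem_image_of_mem ψ (hdD m))
      intro i hi
      have h1 : ψ (d m) i = φ (d m ++ t) i :=
        initSeg_eq_iff.1 ((hψext (d m)).trans hηdm.symm) i (hi.trans_le hkL)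
      exact h1.trans (hagree i hi)
  constructor
  · -- closed
    rw [← isOpen_compl_iff]
    rw [isOpen_iff_forall_mem_open]
    intro σ hσ
    obtain ⟨k, hk⟩ := hsep σ hσ
    refine ⟨PiNat.cylinder σ k, ?_, PiNat.isOpen_cylinder (E := fun _ : ℕ => ℕ) σ k,
      PiNat.self_mem_cylinder σ k⟩
    intro η hη hηA
    exact hk η hηA (PiNat.mem_cylinder_iff.1 hη)
  · -- discrete
    have hdisc : ∀ a ∈ A, ∃ k, ∀ η ∈ A, (∀ i < k, η i = a i) → η = a := by
      intro a ha
      rw [hAimg] at ha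
      obtain ⟨e, he, rfl⟩ := ha
      refine ⟨e.length, ?_⟩
      intro η hη hagree
      rw [hAimg] at hη
      obtain ⟨f, hf, rfl⟩ := hη
      have hae : SeqExtends (φ e) e := hext e he
      have hηe : SeqExtends (φ f) e := extends_of_agree hagree hae le_rfl
      have hηf : SeqExtends (φ f) f := hext f hf
      have hef : e = f := by
        by_contra hne
        exact hincomp e he f hf hne (compat_of_extends hηe hηf)
      rw [hef]
    rw [discreteTopology_iff_isOpen_singleton]
    rintro ⟨a, ha⟩
    obtain ⟨k, hk⟩ := hdisc a ha
    have heq : {(⟨a, ha⟩ : A)} =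
        Subtype.val ⁻¹' (PiNat.cylinder a k) := by
      ext ⟨b, hb⟩
      simp only [Set.mem_singleton_iff, Set.mem_preimage,
        PiNat.mem_cylinder_iff, Subtype.mk.injEq]
      constructor
      · rintro rfl
        exact fun i _ => rfl
      · intro h
        exact hk b hb h
    rw [heq]
    exact (PiNat.isOpen_cylinder (E := fun _ : ℕ => ℕ) a k).preimage continuous_subtype_val
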